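/- arXiv:0906.3392 — 6 statements merged into one kernel-verified Lean document; each statement's English description precedes it below -/
import Mathlib

section
/- Let Ξ : ℝ≥0 → Matrix(n,n,ℝ) be continuous with Ξ(t+s) = Ξ(t)·Ξ(s) for all s,t ≥ 0 and Ξ(0) = id. Then there exists a real n×n matrix β such that Ξ(t) = exp(tβ) for all t ≥ 0. -/
open Matrix

attribute [local instance] Matrix.linftyOpNormedRing Matrix.linftyOpNormedAlgebra

theorem stmt2 (n : ℕ) (Ξ : ℝ → Matrix (Fin n) (Fin n) ℝ)
    (hcont : ContinuousOn Ξ (Set.Ici 0))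
    (hmul : ∀ t ∈ Set.Ici (0:ℝ), ∀ s ∈ Set.Ici (0:ℝ), Ξ (t + s) = Ξ t * Ξ s)
    (h0 : Ξ 0 = 1) :
    ∃ β : Matrix (Fin n) (Fin n) ℝ, ∀ t ∈ Set.Ici (0:ℝ),
      Ξ t = NormedSpace.exp (t • β) := by
  classical
  haveI : CompleteSpace (Matrix (Fin n) (Fin n) ℝ) := FiniteDimensional.complete ℝ _
  -- extend Ξ continuously to all of ℝ
  set Φ : ℝ → Matrix (Fin n) (Fin n) ℝ := fun t => Ξ (max t 0) with hΦdef
  have hmax : Continuous fun t : ℝ => max t 0 := continuous_id.max continuous_const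
  have hΦcont : Continuous Φ :=
    hcont.comp_continuous hmax fun t => Set.mem_Ici.mpr (le_max_right _ _)
  have hΦeq : ∀ t : ℝ, 0 ≤ t → Φ t = Ξ t := fun t ht => by
    simp only [hΦdef, max_eq_left ht]
  have hΦ0 : Φ 0 = 1 := by rw [hΦeq 0 le_rfl]; exact h0
  have hΦmul : ∀ t : ℝ, 0 ≤ t → ∀ s : ℝ, 0 ≤ s → Φ (t + s) = Φ t * Φ s := by
    intro t ht s hs
    rw [hΦeq _ (by linarith), hΦeq _ ht, hΦeq _ hs]
    exact hmul t ht s hs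
  -- choose δ
  have h1 : ContinuousAt Φ 0 := hΦcont.continuousAt
  have h2 : ∀ᶠ s in nhds (0:ℝ), ‖Φ s - 1‖ < 1/2 := by
    have h1' := h1.tendsto
    rw [hΦ0] at h1'
    have h1'' : ∀ᶠ s in nhds (0:ℝ), Φ s ∈ Metric.ball (1:Matrix (Fin n) (Fin n) ℝ) (1/2) :=
      h1' (Metric.ball_mem_nhds _ (by norm_num))
    filter_upwards [h1''] with s hs
    simpa [dist_eq_norm] using hs
  obtain ⟨ε, hε, hball⟩ := Metric.eventually_nhds_iff.mp h2
  set δ : ℝ := ε/2 with hδdef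
  have hδpos : 0 < δ := by positivity
  have hbound : ∀ s ∈ Set.uIoc (0:ℝ) δ, ‖Φ s - 1‖ ≤ 1/2 := by
    intro s hs
    rw [Set.uIoc_of_le hδpos.le] at hs
    refine (hball ?_).le
    rw [Real.dist_eq, sub_zero, abs_of_pos hs.1]
    linarith [hs.2]
  set A : Matrix (Fin n) (Fin n) ℝ := ∫ s in (0:ℝ)..δ, Φ s with hAdef
  have hint : ∀ a b : ℝ, @IntervalIntegrable (Matrix (Fin n) (Fin n) ℝ) _ NormedAddGroup.toENormedAddMonoid Φ MeasureTheory.volume a b := fun a b =>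
    hΦcont.intervalIntegrable a b
  have hAnorm : ‖A - δ • (1:Matrix (Fin n) (Fin n) ℝ)‖ ≤ (1/2) * δ := by
    have h3 : A - δ • (1:Matrix (Fin n) (Fin n) ℝ) = ∫ s in (0:ℝ)..δ, (Φ s - 1) := by
      rw [intervalIntegral.integral_sub (hint 0 δ) intervalIntegrable_const,
        intervalIntegral.integral_const, sub_zero]
    rw [h3]
    have h4 := intervalIntegral.norm_integral_le_of_norm_le_const (C := 1/2)
      (f := fun s => Φ s - 1) (a := 0) (b := δ) hbound
    rwa [sub_zero, abs_of_pos hδpos] at h4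
  -- A is a unit
  have hδne : δ ≠ 0 := hδpos.ne'
  have hAunit : IsUnit A := by
    have hx : ‖(1:Matrix (Fin n) (Fin n) ℝ) - δ⁻¹ • A‖ < 1 := by
      have he : (1:Matrix (Fin n) (Fin n) ℝ) - δ⁻¹ • A
          = δ⁻¹ • (δ • (1:Matrix (Fin n) (Fin n) ℝ) - A) := by
        rw [smul_sub, smul_smul, inv_mul_cancel₀ hδne, one_smul]
      rw [he, norm_smul, norm_inv, Real.norm_eq_abs, abs_of_pos hδpos]
      calc δ⁻¹ * ‖δ • (1:Matrix (Fin n) (Fin n) ℝ) - A‖ ≤ δ⁻¹ * ((1/2) * δ) := by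
            rw [norm_sub_rev]
            exact mul_le_mul_of_nonneg_left hAnorm (by positivity)
        _ = 1/2 := by field_simp
        _ < 1 := by norm_num
    have hB : IsUnit (δ⁻¹ • A) := by
      have hub := (Units.oneSub ((1:Matrix (Fin n) (Fin n) ℝ) - δ⁻¹ • A) hx).isUnit
      simpa using hub
    have hδ1 : IsUnit (δ • (1:Matrix (Fin n) (Fin n) ℝ)) := by
      refine ⟨⟨δ • (1:Matrix (Fin n) (Fin n) ℝ), δ⁻¹ • (1:Matrix (Fin n) (Fin n) ℝ), ?_, ?_⟩, rfl⟩ <;>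
        simp [smul_smul, mul_inv_cancel₀ hδne, inv_mul_cancel₀ hδne]
    have hAe : A = (δ • (1:Matrix (Fin n) (Fin n) ℝ)) * (δ⁻¹ • A) := by
      rw [smul_mul_assoc, one_mul, smul_smul, mul_inv_cancel₀ hδne, one_smul]
    rw [hAe]
    exact hδ1.mul hB
  obtain ⟨u, hu⟩ := hAunit
  set C : Matrix (Fin n) (Fin n) ℝ := ((u⁻¹ : (Matrix (Fin n) (Fin n) ℝ)ˣ) :
    Matrix (Fin n) (Fin n) ℝ) with hCdef
  have hAC : A * C = 1 := by rw [hCdef, ← hu]; exact u.mul_inv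
  -- key identity : Φ t * A = ∫ s in t..t+δ, Φ s for t ≥ 0
  have hkey : ∀ t : ℝ, 0 ≤ t → Φ t * A = ∫ s in t..(t+δ), Φ s := by
    intro t ht
    have L := (ContinuousLinearMap.mul ℝ (Matrix (Fin n) (Fin n) ℝ)
      (Φ t)).intervalIntegral_comp_comm (hint 0 δ)
    simp only [ContinuousLinearMap.mul_apply'] at L
    rw [hAdef, ← L]
    have hco : ∀ s ∈ Set.uIcc (0:ℝ) δ, Φ t * Φ s = Φ (t + s) := by
      intro s hs
      rw [Set.uIcc_of_le hδpos.le] at hs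
      exact (hΦmul t ht s hs.1).symm
    rw [intervalIntegral.integral_congr hco]
    have hca := intervalIntegral.integral_comp_add_left (a := 0) (b := δ) (fun s => Φ s) t
    simpa using hca
  -- the primitive G
  set G : ℝ → Matrix (Fin n) (Fin n) ℝ := fun t => ∫ s in (0:ℝ)..t, Φ s with hGdef
  have hG : ∀ t : ℝ, HasDerivAt G (Φ t) t := fun t =>
    (hΦcont.integral_hasStrictDerivAt 0 t).hasDerivAt
  set β : Matrix (Fin n) (Fin n) ℝ := (Φ δ - 1) * C with hβdef
  -- derivative of Φ within Ici 0
  have hderiv : ∀ t : ℝ, 0 ≤ t → HasDerivWithinAt Φ (Φ t * β) (Set.Ici 0) t := by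
    intro t ht
    have h4 : HasDerivAt (fun t : ℝ => G (t + δ)) (Φ (t + δ)) t :=
      HasDerivAt.comp_add_const t δ (hG (t + δ))
    have hF : HasDerivAt (fun t => (G (t + δ) - G t) * C)
        ((Φ (t + δ) - Φ t) * C) t := (h4.sub (hG t)).mul_const _
    have heq : Set.EqOn Φ (fun t => (G (t + δ) - G t) * C) (Set.Ici 0) := by
      intro x hx
      have hx' : (0:ℝ) ≤ x := hx
      have h5 : G (x + δ) - G x = ∫ s in x..(x+δ), Φ s :=
        intervalIntegral.integral_interval_sub_left (hint 0 (x+δ)) (hint 0 x)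
      have h6 : Φ x * A = G (x + δ) - G x := by rw [h5]; exact hkey x hx'
      calc Φ x = Φ x * (A * C) := by rw [hAC, mul_one]
        _ = Φ x * A * C := by rw [mul_assoc]
        _ = (G (x + δ) - G x) * C := by rw [h6]
    have h7 : HasDerivWithinAt Φ ((Φ (t + δ) - Φ t) * C) (Set.Ici 0) t :=
      (hF.hasDerivWithinAt).congr heq (heq ht)
    have h8 : Φ (t + δ) - Φ t = Φ t * (Φ δ - 1) := by
      rw [mul_sub, mul_one, ← hΦmul t ht δ hδpos.le]
    rw [hβdef, ← mul_assoc, ← h8]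
    exact h7
  refine ⟨β, fun t ht => ?_⟩
  have ht' : (0:ℝ) ≤ t := ht
  -- uniqueness via g t = Φ t * exp(-t β)
  set g : ℝ → Matrix (Fin n) (Fin n) ℝ
    := fun t => Φ t * NormedSpace.exp ((-t) • β) with hgdef
  have hexp : ∀ s : ℝ, HasDerivAt (fun s : ℝ => NormedSpace.exp ((-s) • β))
      (-(NormedSpace.exp ((-s) • β) * β)) s := by
    intro s
    have h9 := hasDerivAt_exp_smul_const (𝕂 := ℝ) β (-s)
    have h10 := h9.scomp s (hasDerivAt_neg s)
    simp only [Function.comp_def] at h10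
    exact h10.congr_deriv (neg_one_smul ℝ _)
  have hcomm : ∀ s : ℝ, β * NormedSpace.exp ((-s) • β)
      = NormedSpace.exp ((-s) • β) * β := by
    intro s
    exact (((Commute.refl β).smul_right (-s)).exp_right).eq
  have hgderiv : ∀ s : ℝ, 0 ≤ s → HasDerivWithinAt g 0 (Set.Ici 0) s := by
    intro s hs
    have h11 := (hderiv s hs).mul ((hexp s).hasDerivWithinAt)
    have hzero : Φ s * β * NormedSpace.exp ((-s) • β)
        + Φ s * -(NormedSpace.exp ((-s) • β) * β) = 0 := by
      rw [mul_assoc, hcomm s, mul_neg, ← mul_assoc, add_neg_cancel]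
    rw [hzero] at h11
    exact h11
  have hgcont : Continuous g := by
    have hec : Continuous fun s : ℝ => NormedSpace.exp ((-s) • β) :=
      NormedSpace.exp_continuous.comp (by fun_prop)
    exact hΦcont.mul hec
  have hgconst : g t = g 0 := by
    rcases eq_or_lt_of_le ht' with h | h
    · rw [← h]
    · refine constant_of_has_deriv_right_zero (f := g) (a := 0) (b := t)
        hgcont.continuousOn ?_ t (Set.mem_Icc.mpr ⟨ht', le_rfl⟩)
      intro x hx
      exact (hgderiv x hx.1).mono (Set.Ici_subset_Ici.mpr hx.1)
  have hg0 : g 0 = 1 := by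
    simp [hgdef, hΦ0]
  have h11 : Φ t * NormedSpace.exp ((-t) • β) = 1 := by
    rw [← hg0]
    exact hgconst
  have h12 : NormedSpace.exp ((-t) • β) * NormedSpace.exp (t • β) = 1 := by
    rw [← Matrix.exp_add_of_commute _ _ (((Commute.refl β).smul_left (-t)).smul_right t)]
    simp
  have hfin : Φ t = NormedSpace.exp (t • β) := by
    calc Φ t = Φ t * (NormedSpace.exp ((-t) • β) * NormedSpace.exp (t • β)) := by
          rw [h12, mul_one]
      _ = (Φ t * NormedSpace.exp ((-t) • β)) * NormedSpace.exp (t • β) := by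
          rw [mul_assoc]
      _ = NormedSpace.exp (t • β) := by rw [h11, one_mul]
  rw [← hΦeq t ht', hfin]
end

section
/- Let (X_t) be a time-homogeneous Markov process on D = ℝ≥0^m × ℝ^n with the affine property: E^x[exp(⟨u, X_t⟩)] = Φ(t,u)·exp(⟨ψ(t,u), x⟩) for all x ∈ D, t ≥ 0, u ∈ iℝ^d, with Φ(t,u) ≠ 0. Then Φ and ψ satisfy the semi-flow equations: Φ(t+s,u) = Φ(t,u)·Φ(s,ψ(t,u)) and ψ(t+s,u) = ψ(s,ψ(t,u)) for all s,t ≥ 0, u ∈ iℝ^d. -/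
open Complex MeasureTheory

lemma exp_lin_eq (a b : ℂ)
    (h : ∀ c : ℝ, 0 ≤ c → Complex.exp (a * c) = Complex.exp (b * c)) : a = b := by
  have h1 : Complex.exp a = Complex.exp b := by simpa using h 1 zero_le_one
  have h2 : Complex.exp (a * (Real.sqrt 2 : ℝ)) = Complex.exp (b * (Real.sqrt 2 : ℝ)) :=
    h _ (Real.sqrt_nonneg 2)
  obtain ⟨nn, hn⟩ := Complex.exp_eq_exp_iff_exists_int.mp h1
  obtain ⟨k, hk⟩ := Complex.exp_eq_exp_iff_exists_int.mp h2
  have h2pi : (2 * Real.pi * Complex.I : ℂ) ≠ 0 := by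
    simp [Real.pi_ne_zero, Complex.I_ne_zero]
  have key : (nn : ℂ) * (Real.sqrt 2 : ℝ) = (k : ℂ) := by
    have : (nn : ℂ) * (Real.sqrt 2 : ℝ) * (2 * Real.pi * Complex.I)
        = (k : ℂ) * (2 * Real.pi * Complex.I) := by
      have := hk
      rw [hn] at this
      ring_nf at this ⊢
      linear_combination this
    exact mul_right_cancel₀ h2pi this
  have keyR : (nn : ℝ) * Real.sqrt 2 = (k : ℝ) := by
    have := congrArg Complex.re key
    simpa using this
  have hnz : nn = 0 := by
    by_contra hne
    apply irrational_sqrt_two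
    refine ⟨(k : ℚ) / (nn : ℚ), ?_⟩
    have hnr : (nn : ℝ) ≠ 0 := Int.cast_ne_zero.mpr hne
    push_cast
    field_simp
    linarith [keyR]
  rw [hn, hnz]
  simp

/-- The set `𝒰` of `u ∈ ℂ^d` with `Re u_I ≤ 0` and `Re u_J = 0`. -/
def calU (m n : ℕ) : Set (Fin (m + n) → ℂ) :=
  {u | (∀ i : Fin (m + n), (i : ℕ) < m → (u i).re ≤ 0) ∧
       (∀ j : Fin (m + n), m ≤ (j : ℕ) → (u j).re = 0)}

theorem stmt10 (m n : ℕ)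
    (D : Set (Fin (m + n) → ℝ))
    (hD : D = {x | ∀ i : Fin (m + n), (i : ℕ) < m → 0 ≤ x i})
    -- transition kernels of the time-homogeneous Markov process
    (p : ℝ → (Fin (m + n) → ℝ) → Measure (Fin (m + n) → ℝ))
    (hprob : ∀ t ≥ (0:ℝ), ∀ x ∈ D, IsProbabilityMeasure (p t x))
    (hsupp : ∀ t ≥ (0:ℝ), ∀ x ∈ D, p t x Dᶜ = 0)
    -- the Markov property / Chapman–Kolmogorov equation
    (hMarkov : ∀ t ≥ (0:ℝ), ∀ s ≥ (0:ℝ), ∀ x ∈ D,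
      ∀ f : (Fin (m + n) → ℝ) → ℂ, Measurable f → (∀ ξ, ‖f ξ‖ ≤ 1) →
        ∫ ξ, f ξ ∂(p (t + s) x) = ∫ y, (∫ ξ, f ξ ∂(p t y)) ∂(p s x))
    (Φ : ℝ → (Fin (m + n) → ℂ) → ℂ)
    (ψ : ℝ → (Fin (m + n) → ℂ) → (Fin (m + n) → ℂ))
    -- the affine property of the characteristic function
    (haffine : ∀ t ≥ (0:ℝ), ∀ u ∈ calU m n, ∀ x ∈ D,
      ∫ ξ, Complex.exp (∑ k, u k * (ξ k : ℂ)) ∂(p t x)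
        = Φ t u * Complex.exp (∑ k, ψ t u k * (x k : ℂ)))
    (hΦne : ∀ t ≥ (0:ℝ), ∀ u ∈ calU m n, Φ t u ≠ 0)
    (hψmem : ∀ t ≥ (0:ℝ), ∀ u ∈ calU m n, ψ t u ∈ calU m n) :
    ∀ t ≥ (0:ℝ), ∀ s ≥ (0:ℝ), ∀ u : Fin (m + n) → ℂ, (∀ k, (u k).re = 0) →
      Φ (t + s) u = Φ t u * Φ s (ψ t u) ∧
      ψ (t + s) u = ψ s (ψ t u) := by
  intro t ht s hs u hu
  have huU : u ∈ calU m n := by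
    constructor
    · intro i _; exact le_of_eq (hu i)
    · intro j _; exact hu j
  have hts : t + s ≥ 0 := by linarith
  have hψU : ψ t u ∈ calU m n := hψmem t ht u huU
  -- the main identity for every x ∈ D
  have key : ∀ x ∈ D,
      Φ (t + s) u * Complex.exp (∑ k, ψ (t + s) u k * (x k : ℂ))
        = (Φ t u * Φ s (ψ t u)) * Complex.exp (∑ k, ψ s (ψ t u) k * (x k : ℂ)) := by
    intro x hx
    set f : (Fin (m + n) → ℝ) → ℂ := fun ξ => Complex.exp (∑ k, u k * (ξ k : ℂ)) with hf
    have hmf : Measurable f := by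
      apply Complex.measurable_exp.comp
      exact Finset.measurable_sum _ fun k _ =>
        (Complex.measurable_ofReal.comp (measurable_pi_apply k)).const_mul (u k)
    have hbd : ∀ ξ, ‖f ξ‖ ≤ 1 := by
      intro ξ
      rw [hf]
      simp only [Complex.norm_exp]
      have : (∑ k, u k * ((ξ k : ℝ) : ℂ)).re = 0 := by
        rw [Complex.re_sum]
        apply Finset.sum_eq_zero
        intro k _
        simp [hu k]
      rw [this]
      simp
    have hM := hMarkov t ht s hs x hx f hmf hbd
    have hL : ∫ ξ, f ξ ∂(p (t + s) x)
        = Φ (t + s) u * Complex.exp (∑ k, ψ (t + s) u k * (x k : ℂ)) :=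
      haffine (t + s) hts u huU x hx
    have haeD : ∀ᵐ y ∂(p s x), y ∈ D := by
      rw [MeasureTheory.ae_iff]
      exact hsupp s hs x hx
    have hinner : ∫ y, (∫ ξ, f ξ ∂(p t y)) ∂(p s x)
        = ∫ y, Φ t u * Complex.exp (∑ k, ψ t u k * (y k : ℂ)) ∂(p s x) := by
      apply integral_congr_ae
      filter_upwards [haeD] with y hy
      exact haffine t ht u huU y hy
    rw [← hL, hM, hinner, integral_const_mul, haffine s hs (ψ t u) hψU x hx]
    ring
  -- evaluate at x = 0
  have h0D : (0 : Fin (m + n) → ℝ) ∈ D := by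
    rw [hD]; intro i _; simp
  have hΦeq : Φ (t + s) u = Φ t u * Φ s (ψ t u) := by
    have := key 0 h0D
    simpa using this
  refine ⟨hΦeq, ?_⟩
  have hΦne' : Φ (t + s) u ≠ 0 := hΦne (t + s) hts u huU
  -- for every coordinate k, use x = c • e_k
  funext k
  apply exp_lin_eq
  intro c hc
  have hxD : (fun j => if j = k then c else 0 : Fin (m + n) → ℝ) ∈ D := by
    rw [hD]; intro i _
    dsimp only
    split_ifs <;> simp [hc]
  have hsum : ∀ v : Fin (m + n) → ℂ,
      ∑ j, v j * (((if j = k then c else 0 : ℝ) : ℂ)) = v k * (c : ℂ) := by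
    intro v
    rw [Finset.sum_eq_single k]
    · simp
    · intro b _ hb; simp [hb]
    · intro hk; exact absurd (Finset.mem_univ k) hk
  have := key _ hxD
  simp only [hsum] at this
  rw [hΦeq] at this
  exact mul_left_cancel₀ (hΦeq ▸ hΦne') this
end

section
/- Let Φ : ℝ≥0 × iℝ^d → ℂ and ψ : ℝ≥0 × iℝ^d → ℂ^d be such that for a family of probability measures (μ_{t,x})_{t≥0, x∈D} on D = ℝ≥0^m × ℝ^n one has ∫ exp(⟨u,ξ⟩) dμ_{t,x}(ξ) = Φ(t,u)·exp(⟨ψ(t,u), x⟩) for all u ∈ iℝ^d. Then |Φ(t,u)| ≤ 1 and ψ(t,u) ∈ 𝒰 = {w ∈ ℂ^d : Re w_I ≤ 0, Re w_J = 0} for all t ≥ 0, u ∈ iℝ^d with Φ(t,u) ≠ 0. -/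
open Complex MeasureTheory

theorem stmt11 (m n : ℕ)
    (D : Set (Fin (m + n) → ℝ))
    (hD : D = {x | ∀ i : Fin (m + n), (i : ℕ) < m → 0 ≤ x i})
    (μ : ℝ → (Fin (m + n) → ℝ) → Measure (Fin (m + n) → ℝ))
    (hprob : ∀ t ≥ (0:ℝ), ∀ x ∈ D, IsProbabilityMeasure (μ t x))
    (hsupp : ∀ t ≥ (0:ℝ), ∀ x ∈ D, μ t x Dᶜ = 0)
    (Φ : ℝ → (Fin (m + n) → ℂ) → ℂ)
    (ψ : ℝ → (Fin (m + n) → ℂ) → (Fin (m + n) → ℂ))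
    (haffine : ∀ t ≥ (0:ℝ), ∀ u : Fin (m + n) → ℂ, (∀ k, (u k).re = 0) →
      ∀ x ∈ D, ∫ ξ, Complex.exp (∑ k, u k * (ξ k : ℂ)) ∂(μ t x)
        = Φ t u * Complex.exp (∑ k, ψ t u k * (x k : ℂ))) :
    ∀ t ≥ (0:ℝ), ∀ u : Fin (m + n) → ℂ, (∀ k, (u k).re = 0) → Φ t u ≠ 0 →
      ‖Φ t u‖ ≤ 1 ∧
      (∀ i : Fin (m + n), (i : ℕ) < m → (ψ t u i).re ≤ 0) ∧
      (∀ j : Fin (m + n), m ≤ (j : ℕ) → (ψ t u j).re = 0) := by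
  intro t ht u hu hΦ
  have hD0 : (0 : Fin (m+n) → ℝ) ∈ D := by rw [hD]; intro i _; exact le_refl 0
  have key : ∀ x ∈ D, ‖Φ t u‖ * Real.exp ((∑ k, ψ t u k * (x k : ℂ)).re) ≤ 1 := by
    intro x hx
    have h1 := haffine t ht u hu x hx
    have hbound : ‖∫ ξ, Complex.exp (∑ k, u k * (ξ k : ℂ)) ∂(μ t x)‖ ≤ 1 := by
      have hpm := hprob t ht x hx
      have hb := norm_integral_le_of_norm_le_const (μ := μ t x)
        (f := fun ξ => Complex.exp (∑ k, u k * ((ξ k : ℝ) : ℂ))) (C := 1) ?_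
      · simpa [measure_univ] using hb
      · filter_upwards with ξ
        rw [Complex.norm_exp]
        have hre : (∑ k, u k * ((ξ k : ℝ) : ℂ)).re = 0 := by
          rw [Complex.re_sum]
          apply Finset.sum_eq_zero
          intro k _
          simp [hu k]
        rw [hre, Real.exp_zero]
    rw [h1, norm_mul, Complex.norm_exp] at hbound
    exact hbound
  have hA1 : ‖Φ t u‖ ≤ 1 := by simpa using key 0 hD0
  set A := ‖Φ t u‖ with hAdef
  have hApos : 0 < A := norm_pos_iff.mpr hΦ
  have coord : ∀ (k : Fin (m+n)) (s : ℝ), (fun j => if j = k then s else 0) ∈ D →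
      A * Real.exp ((ψ t u k).re * s) ≤ 1 := by
    intro k s hmem
    have hk := key _ hmem
    have hsum : (∑ j, ψ t u j * (((if j = k then s else 0 : ℝ)) : ℂ)) = ψ t u k * (s:ℂ) := by
      rw [Finset.sum_eq_single k]
      · simp
      · intro b _ hb; simp [hb]
      · simp
    rw [hsum] at hk
    simpa using hk
  have pick : ∀ k : Fin (m+n), (ψ t u k).re ≠ 0 →
      (fun j => if j = k then (1 - Real.log A)/(ψ t u k).re else 0) ∈ D → False := by
    intro k hr hmem
    have h := coord k _ hmem
    have h2 : (ψ t u k).re * ((1 - Real.log A)/(ψ t u k).re) = 1 - Real.log A := by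
      field_simp
    rw [h2] at h
    have h3 : A * Real.exp (1 - Real.log A) = Real.exp 1 := by
      rw [Real.exp_sub, Real.exp_log hApos]
      field_simp
    rw [h3] at h
    have : (1:ℝ) < Real.exp 1 := by rw [Real.one_lt_exp_iff]; norm_num
    linarith
  have hlogA : Real.log A ≤ 0 := Real.log_nonpos (le_of_lt hApos) hA1
  refine ⟨hA1, ?_, ?_⟩
  · intro i hi
    by_contra hpos
    push_neg at hpos
    apply pick i (ne_of_gt hpos)
    rw [hD]
    intro j _
    by_cases hj : j = i
    · simp only [hj, if_pos rfl]
      apply div_nonneg (by linarith) (le_of_lt hpos)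
    · simp [hj]
  · intro j hj
    by_contra hr
    apply pick j hr
    rw [hD]
    intro i hi
    have hij : i ≠ j := by
      intro h; rw [h] at hi; omega
    simp [hij]
end

section
/- Let φ : ℝ → ℂ be the characteristic function of a real random variable X, i.e. φ(y) = E[exp(iyX)]. If 1/φ is also a characteristic function of some real random variable, then X is almost surely constant, i.e. φ(y) = exp(iym) for some m ∈ ℝ. -/
open Complex MeasureTheory

theorem stmt12 (μ ν : Measure ℝ) [IsProbabilityMeasure μ] [IsProbabilityMeasure ν]
    (φ : ℝ → ℂ) (hφ : ∀ y : ℝ, φ y = ∫ x, Complex.exp (Complex.I * y * x) ∂μ)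
    -- `1/φ` is the characteristic function of `ν`
    (hrecip : ∀ y : ℝ, φ y * (∫ x, Complex.exp (Complex.I * y * x) ∂ν) = 1) :
    ∃ c : ℝ, ∀ y : ℝ, φ y = Complex.exp (Complex.I * y * c) := by
  have hnorm : ∀ (y s : ℝ), ‖Complex.exp (Complex.I * y * s)‖ = 1 := by
    intro y s
    rw [Complex.norm_exp]
    simp
  -- integrability of the product integrand
  have hiprod : ∀ y : ℝ, Integrable
      (fun p : ℝ × ℝ => Complex.exp (Complex.I * y * (p.1 + p.2))) (μ.prod ν) := by
    intro y
    refine (integrable_const (1 : ℝ)).mono' ?_ ?_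
    · exact (Complex.continuous_exp.comp (by fun_prop)).aestronglyMeasurable
    · refine Filter.Eventually.of_forall fun p => ?_
      have he : ((p.1 : ℂ) + (p.2 : ℂ)) = ((p.1 + p.2 : ℝ) : ℂ) := by push_cast; ring
      exact le_of_eq (by rw [he]; simpa using hnorm y (p.1 + p.2))
  -- the characteristic function of the convolution is identically 1
  have key : ∀ y : ℝ, ∫ p : ℝ × ℝ, Complex.exp (Complex.I * y * (p.1 + p.2)) ∂(μ.prod ν) = 1 := by
    intro y
    rw [MeasureTheory.integral_prod _ (hiprod y)]
    have hinner : ∀ a : ℝ, (∫ b : ℝ, Complex.exp (Complex.I * y * (a + b)) ∂ν)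
        = Complex.exp (Complex.I * y * a) * ∫ b : ℝ, Complex.exp (Complex.I * y * b) ∂ν := by
      intro a
      rw [← integral_const_mul]
      congr 1
      funext b
      rw [← Complex.exp_add]
      ring_nf
    simp_rw [hinner]
    rw [integral_mul_const, ← hφ y, hrecip y]
  -- real part: cos is a.e. 1
  have key2 : ∀ y : ℝ, ∀ᵐ p : ℝ × ℝ ∂(μ.prod ν), Real.cos (y * (p.1 + p.2)) = 1 := by
    intro y
    have hre : ∀ p : ℝ × ℝ, (Complex.exp (Complex.I * y * (p.1 + p.2))).re
        = Real.cos (y * (p.1 + p.2)) := by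
      intro p
      rw [show Complex.I * y * (p.1 + p.2) = ((y * (p.1 + p.2) : ℝ) : ℂ) * Complex.I by
        push_cast; ring]
      exact Complex.exp_ofReal_mul_I_re _
    have hicos : Integrable (fun p : ℝ × ℝ => Real.cos (y * (p.1 + p.2))) (μ.prod ν) := by
      refine (integrable_const (1 : ℝ)).mono' ?_ ?_
      · exact (Real.continuous_cos.comp (by fun_prop)).aestronglyMeasurable
      · exact Filter.Eventually.of_forall fun p => by
          simpa using Real.abs_cos_le_one (y * (p.1 + p.2))
    have hint1 : ∫ p : ℝ × ℝ, Real.cos (y * (p.1 + p.2)) ∂(μ.prod ν) = 1 := by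
      have := integral_re (hiprod y)
      rw [key y] at this
      simp only [RCLike.re_to_complex] at this
      simp only [hre] at this
      exact this
    have hzero : ∫ p : ℝ × ℝ, (1 - Real.cos (y * (p.1 + p.2))) ∂(μ.prod ν) = 0 := by
      rw [integral_sub (integrable_const 1) hicos, hint1, integral_const]
      simp
    have := (integral_eq_zero_iff_of_nonneg_ae
      (Filter.Eventually.of_forall fun p => by
        simp [sub_nonneg, Real.cos_le_one]) ((integrable_const 1).sub hicos)).1 hzero
    filter_upwards [this] with p hp
    have : 1 - Real.cos (y * (p.1 + p.2)) = 0 := hp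
    linarith
  -- combine y = 1 and y = √2 to get the sum a.e. zero
  have hsum : ∀ᵐ p : ℝ × ℝ ∂(μ.prod ν), p.1 + p.2 = 0 := by
    filter_upwards [key2 1, key2 (Real.sqrt 2)] with p h1 h2
    rw [one_mul] at h1
    obtain ⟨n, hn⟩ := (Real.cos_eq_one_iff _).1 h1
    obtain ⟨m, hm⟩ := (Real.cos_eq_one_iff _).1 h2
    by_contra hs
    have hn0 : (n : ℝ) ≠ 0 := by
      intro h
      exact hs (by rw [← hn, h, zero_mul])
    have h2pi : (2 * Real.pi) ≠ 0 := by positivity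
    have hmn : (m : ℝ) = Real.sqrt 2 * n := by
      refine mul_right_cancel₀ h2pi ?_
      rw [hm, ← hn]; ring
    exact irrational_sqrt_two ⟨(m : ℚ) / (n : ℚ), by
      push_cast
      rw [hmn, mul_div_assoc, div_self hn0, mul_one]⟩
  have hae : ∀ᵐ a ∂μ, ∀ᵐ b ∂ν, a + b = 0 :=
    Measure.ae_ae_of_ae_prod hsum
  have hsubs : ∀ a a' : ℝ, (∀ᵐ b ∂ν, a + b = 0) → (∀ᵐ b ∂ν, a' + b = 0) → a = a' := by
    intro a a' h h'
    obtain ⟨b, hb1, hb2⟩ := (h.and h').exists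
    linarith
  obtain ⟨c, hc⟩ := hae.exists
  have hμc : ∀ᵐ a ∂μ, a = c := by
    filter_upwards [hae] with a ha
    exact hsubs a c ha hc
  refine ⟨c, fun y => ?_⟩
  rw [hφ y]
  have : (fun x : ℝ => Complex.exp (Complex.I * y * x)) =ᵐ[μ]
      fun _ => Complex.exp (Complex.I * y * c) := by
    filter_upwards [hμc] with a ha
    rw [ha]
  rw [integral_congr_ae this, integral_const]
  simp
end

section
/- Let x : ℝ≥0 → ℝ^d be a càdlàg function and K a real d×d matrix. Define z(t) = x(t) − Kᵀ·∫₀ᵗ x(s) ds. Then x can be recovered from z by x(t) = z(t) + Kᵀ·∫₀ᵗ exp((t−s)Kᵀ)·z(s) ds. -/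
open Matrix intervalIntegral

open MeasureTheory Set Filter in
/-- A right-continuous function into `ℝ^d` is strongly measurable. -/
lemma cadlag_stronglyMeasurable {d : ℕ} (x : ℝ → (Fin d → ℝ))
    (hrc : ∀ t : ℝ, ContinuousWithinAt x (Set.Ici t) t) : StronglyMeasurable x := by
  have key : ∀ n : ℕ, StronglyMeasurable (fun t : ℝ => x ((⌈t * 2 ^ n⌉ : ℤ) / 2 ^ n)) := by
    intro n
    have : (fun t : ℝ => x ((⌈t * 2 ^ n⌉ : ℤ) / 2 ^ n))
        = (fun k : ℤ => x ((k : ℝ) / 2 ^ n)) ∘ (fun t : ℝ => ⌈t * 2 ^ n⌉) := rfl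
    rw [this]
    exact ((measurable_of_countable _).comp
      (Int.measurable_ceil.comp (measurable_id.mul_const _))).stronglyMeasurable
  apply stronglyMeasurable_of_tendsto atTop key
  rw [tendsto_pi_nhds]
  intro t
  have hpos : ∀ n : ℕ, (0 : ℝ) < 2 ^ n := fun n => by positivity
  have h1 : ∀ n : ℕ, t ≤ ((⌈t * 2 ^ n⌉ : ℤ) : ℝ) / 2 ^ n := by
    intro n
    rw [le_div_iff₀ (hpos n)]
    exact Int.le_ceil _
  have h2 : ∀ n : ℕ, ((⌈t * 2 ^ n⌉ : ℤ) : ℝ) / 2 ^ n ≤ t + (2 ^ n)⁻¹ := by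
    intro n
    rw [div_le_iff₀ (hpos n)]
    have := (Int.ceil_lt_add_one (t * 2 ^ n)).le
    calc ((⌈t * 2 ^ n⌉ : ℤ) : ℝ) ≤ t * 2 ^ n + 1 := this
      _ = (t + (2 ^ n)⁻¹) * 2 ^ n := by rw [add_mul, inv_mul_cancel₀ (hpos n).ne']
  have htend : Tendsto (fun n : ℕ => ((⌈t * 2 ^ n⌉ : ℤ) : ℝ) / 2 ^ n) atTop (nhds t) := by
    have hlim : Tendsto (fun n : ℕ => t + ((2 : ℝ) ^ n)⁻¹) atTop (nhds t) := by
      have : Tendsto (fun n : ℕ => ((2 : ℝ) ^ n)⁻¹) atTop (nhds 0) := by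
        apply tendsto_inv_atTop_zero.comp
        exact tendsto_pow_atTop_atTop_of_one_lt one_lt_two
      simpa using tendsto_const_nhds.add this
    exact tendsto_of_tendsto_of_tendsto_of_le_of_le tendsto_const_nhds hlim h1 h2
  apply (hrc t).tendsto.comp
  rw [tendsto_nhdsWithin_iff]
  exact ⟨htend, Eventually.of_forall fun n => h1 n⟩

open MeasureTheory Set Filter in
/-- A càdlàg function into `ℝ^d` is bounded on compact intervals. -/
lemma cadlag_bounded {d : ℕ} (x : ℝ → (Fin d → ℝ))
    (hrc : ∀ t : ℝ, ContinuousWithinAt x (Set.Ici t) t)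
    (hll : ∀ t : ℝ, ∃ l : Fin d → ℝ, Filter.Tendsto x (nhdsWithin t (Set.Iio t)) (nhds l))
    (a b : ℝ) : ∃ C : ℝ, ∀ u ∈ Set.Icc a b, ‖x u‖ ≤ C := by
  have loc : ∀ s : ℝ, ∃ C : ℝ, ∀ᶠ u in nhds s, ‖x u‖ ≤ C := by
    intro s
    obtain ⟨l, hl⟩ := hll s
    have h1 : ∀ᶠ u in nhdsWithin s (Set.Ici s), ‖x u‖ ≤ max (‖x s‖ + 1) (‖l‖ + 1) := by
      filter_upwards [(hrc s).norm.eventually_lt_const (lt_add_one ‖x s‖)] with u hu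
      exact hu.le.trans (le_max_left _ _)
    have h2 : ∀ᶠ u in nhdsWithin s (Set.Iio s), ‖x u‖ ≤ max (‖x s‖ + 1) (‖l‖ + 1) := by
      filter_upwards [hl.norm.eventually_lt_const (lt_add_one ‖l‖)] with u hu
      exact hu.le.trans (le_max_right _ _)
    refine ⟨max (‖x s‖ + 1) (‖l‖ + 1), ?_⟩
    rw [← nhdsLT_sup_nhdsGE s, Filter.eventually_sup]
    exact ⟨h2, h1⟩
  choose C hC using loc
  obtain ⟨tfin, -, htfin⟩ := (isCompact_Icc : IsCompact (Set.Icc a b)).elim_nhds_subcover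
    (fun s => {u | ‖x u‖ ≤ C s}) (fun s _ => hC s)
  refine ⟨∑ s ∈ tfin, |C s|, fun u hu => ?_⟩
  obtain ⟨s, hs, hus⟩ := Set.mem_iUnion₂.1 (htfin hu)
  calc ‖x u‖ ≤ C s := hus
    _ ≤ |C s| := le_abs_self _
    _ ≤ ∑ s ∈ tfin, |C s| := Finset.single_le_sum (f := fun s => |C s|) (fun i _ => abs_nonneg _) hs

open MeasureTheory Set Filter in
lemma ii_of_bdd {d : ℕ} {f : ℝ → (Fin d → ℝ)} (hm : AEStronglyMeasurable f volume)
    {a b C : ℝ} (hb : ∀ u ∈ Set.uIcc a b, ‖f u‖ ≤ C) : IntervalIntegrable f volume a b := by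
  rw [intervalIntegrable_iff]
  have hfin : volume (Set.uIoc a b) < ⊤ := measure_Ioc_lt_top
  apply (MeasureTheory.integrableOn_const (C := C) hfin.ne).mono' hm.restrict
  rw [ae_restrict_iff' measurableSet_uIoc]
  exact Eventually.of_forall fun u hu => by
    simpa using hb u (Set.uIoc_subset_uIcc hu)

theorem stmt15 (d : ℕ) (x : ℝ → (Fin d → ℝ)) (K : Matrix (Fin d) (Fin d) ℝ)
    -- x is càdlàg : right-continuous with left limits
    (hrc : ∀ t : ℝ, ContinuousWithinAt x (Set.Ici t) t)
    (hll : ∀ t : ℝ, ∃ l : Fin d → ℝ, Filter.Tendsto x (nhdsWithin t (Set.Iio t)) (nhds l))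
    (z : ℝ → (Fin d → ℝ))
    (hz : ∀ t : ℝ, z t = x t - Kᵀ *ᵥ (∫ s in (0:ℝ)..t, x s)) :
    ∀ t ≥ (0:ℝ),
      x t = z t + Kᵀ *ᵥ (∫ s in (0:ℝ)..t, (NormedSpace.exp ((t - s) • Kᵀ)) *ᵥ z s) := by
  letI : SeminormedRing (Matrix (Fin d) (Fin d) ℝ) := Matrix.linftyOpSemiNormedRing
  letI : NormedRing (Matrix (Fin d) (Fin d) ℝ) := Matrix.linftyOpNormedRing
  letI : NormedAlgebra ℝ (Matrix (Fin d) (Fin d) ℝ) := Matrix.linftyOpNormedAlgebra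
  intro t ht
  set A : Matrix (Fin d) (Fin d) ℝ := Kᵀ with hA
  -- basic integrability facts
  have hxm : MeasureTheory.StronglyMeasurable x := cadlag_stronglyMeasurable x hrc
  have hxint : ∀ a b : ℝ, IntervalIntegrable x MeasureTheory.volume a b := by
    intro a b
    obtain ⟨C, hC⟩ := cadlag_bounded x hrc hll (min a b) (max a b)
    refine ii_of_bdd hxm.aestronglyMeasurable (fun u hu => hC u ?_)
    rwa [Set.uIcc] at hu
  -- the primitive of x
  set y : ℝ → (Fin d → ℝ) := fun r => ∫ s in (0:ℝ)..r, x s with hy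
  have hy_cont : Continuous y := intervalIntegral.continuous_primitive hxint 0
  -- the bilinear pairing as a continuous linear map
  let Φ₀ : Matrix (Fin d) (Fin d) ℝ →ₗ[ℝ] ((Fin d → ℝ) →L[ℝ] (Fin d → ℝ)) :=
    { toFun := fun M => LinearMap.toContinuousLinearMap (Matrix.mulVecLin M)
      map_add' := fun M N => by ext v; simp [Matrix.add_mulVec]
      map_smul' := fun c M => by ext v; simp [Matrix.smul_mulVec] }
  let Φ : Matrix (Fin d) (Fin d) ℝ →L[ℝ] ((Fin d → ℝ) →L[ℝ] (Fin d → ℝ)) :=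
    LinearMap.toContinuousLinearMap Φ₀
  have hΦ : ∀ (M : Matrix (Fin d) (Fin d) ℝ) (v : Fin d → ℝ), Φ M v = M *ᵥ v :=
    fun M v => rfl
  -- the matrix exponential factor and its derivative
  set E : ℝ → Matrix (Fin d) (Fin d) ℝ := fun s => NormedSpace.exp ((t - s) • A) with hE
  have hE_deriv : ∀ s : ℝ, HasDerivAt E (-(A * E s)) s := by
    intro s
    have h1 := hasDerivAt_exp_smul_const' (𝕂 := ℝ) A (t - s)
    have h2 : HasDerivAt (fun u : ℝ => t - u) (-1) s := (hasDerivAt_id s).const_sub t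
    have := HasDerivAt.scomp (x := s) h1 h2
    simp only [Function.comp_def, neg_one_smul] at this
    exact this
  have hE_cont : Continuous E := by
    have : Continuous fun s : ℝ => (t - s) • A :=
      ((continuous_const.sub continuous_id).smul continuous_const)
    exact continuous_iff_continuousAt.2 fun s => (hE_deriv s).continuousAt
  -- right derivative of y
  have hy_deriv : ∀ s : ℝ, HasDerivWithinAt y (x s) (Set.Ioi s) s := by
    intro s
    have := intervalIntegral.integral_hasDerivWithinAt_right (a := 0) (b := s)
      (s := Set.Ici s) (t := Set.Ioi s) (hxint 0 s)
      hxm.stronglyMeasurableAtFilter ((hrc s).mono Set.Ioi_subset_Ici_self)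
    exact this.mono Set.Ioi_subset_Ici_self
  -- F and its right derivative
  set F : ℝ → (Fin d → ℝ) := fun s => Φ (E s) (y s) with hF
  have hF_deriv : ∀ s : ℝ, HasDerivWithinAt F (E s *ᵥ z s) (Set.Ioi s) s := by
    intro s
    have hc : HasDerivWithinAt (fun u => Φ (E u)) (Φ (-(A * E s))) (Set.Ioi s) s :=
      (Φ.hasFDerivAt.comp_hasDerivAt s (hE_deriv s)).hasDerivWithinAt
    have := hc.clm_apply (hy_deriv s)
    have hcomm : E s * A = A * E s := by
      have : Commute ((t - s) • A) A := (Commute.refl A).smul_left _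
      exact this.exp_left.eq
    have heq : Φ (-(A * E s)) (y s) + Φ (E s) (x s) = E s *ᵥ z s := by
      rw [hΦ, hΦ, hz s, Matrix.mulVec_sub, Matrix.mulVec_mulVec, hcomm]
      simp [Matrix.neg_mulVec]
      abel
    rwa [heq] at this
  -- continuity of F
  have hF_cont : Continuous F := by
    have h1 : Continuous fun s => Φ (E s) := Φ.continuous.comp hE_cont
    exact h1.clm_apply hy_cont
  -- strong measurability of z and of the integrand
  have hzm : MeasureTheory.StronglyMeasurable z := by
    have hz' : z = fun s => x s - Φ A (y s) := funext hz
    rw [hz']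
    exact hxm.sub ((Φ A).continuous.comp hy_cont).stronglyMeasurable
  have hint : IntervalIntegrable (fun s => E s *ᵥ z s) MeasureTheory.volume 0 t := by
    have hm : MeasureTheory.StronglyMeasurable (fun s => E s *ᵥ z s) := by
      have hpair : MeasureTheory.StronglyMeasurable (fun s => (Φ (E s), z s)) :=
        (Φ.continuous.comp hE_cont).stronglyMeasurable.prodMk hzm
      have hg : Continuous
          (fun p : ((Fin d → ℝ) →L[ℝ] (Fin d → ℝ)) × (Fin d → ℝ) => p.1 p.2) :=
        isBoundedBilinearMap_apply.continuous
      exact hg.comp_stronglyMeasurable hpair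
    obtain ⟨CE, hCE⟩ := (isCompact_uIcc (a := (0:ℝ)) (b := t)).exists_bound_of_continuousOn
      (Φ.continuous.comp hE_cont).continuousOn
    obtain ⟨Cx, hCx⟩ := cadlag_bounded x hrc hll (min 0 t) (max 0 t)
    obtain ⟨Cy, hCy⟩ := (isCompact_uIcc (a := (0:ℝ)) (b := t)).exists_bound_of_continuousOn
      ((Φ A).continuous.comp hy_cont).continuousOn
    refine ii_of_bdd hm.aestronglyMeasurable (C := CE * (Cx + Cy)) (fun u hu => ?_)
    have hxu : ‖x u‖ ≤ Cx := hCx u (by rwa [Set.uIcc] at hu)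
    have hyu : ‖Φ A (y u)‖ ≤ Cy := hCy u hu
    have hzu : ‖z u‖ ≤ Cx + Cy := by
      rw [hz u]
      exact (norm_sub_le _ _).trans (add_le_add hxu hyu)
    have hEu : ‖Φ (E u)‖ ≤ CE := hCE u hu
    calc ‖E u *ᵥ z u‖ = ‖Φ (E u) (z u)‖ := by rw [hΦ]
      _ ≤ ‖Φ (E u)‖ * ‖z u‖ := (Φ (E u)).le_opNorm _
      _ ≤ CE * (Cx + Cy) :=
          mul_le_mul hEu hzu (norm_nonneg _) ((norm_nonneg _).trans hEu)
  -- fundamental theorem of calculus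
  have hkey : (∫ s in (0:ℝ)..t, E s *ᵥ z s) = y t := by
    have h0 : F t = y t := by
      have hEt : E t = 1 := by
        show NormedSpace.exp ((t - t) • A) = 1
        rw [sub_self, zero_smul, NormedSpace.exp_zero]
      show Φ (E t) (y t) = y t
      rw [hEt, hΦ, Matrix.one_mulVec]
    have h1 : F 0 = 0 := by
      show Φ (E 0) (y 0) = 0
      have hy0 : y 0 = 0 := intervalIntegral.integral_same
      rw [hy0, map_zero]
    rw [intervalIntegral.integral_eq_sub_of_hasDeriv_right_of_le ht hF_cont.continuousOn
        (fun s _ => hF_deriv s) hint, h0, h1, sub_zero]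
  show x t = z t + A *ᵥ (∫ s in (0:ℝ)..t, E s *ᵥ z s)
  rw [hkey, hz t]
  show x t = x t - A *ᵥ y t + A *ᵥ y t
  abel
end

section
/- Let Υ : [0,T) × U → ℂ^k be a local semi-flow (Υ(t+s,u) = Υ(t,Υ(s,u)), Υ(0,u) = u) on an open set U ⊆ ℂ^k, jointly continuous, and continuously differentiable in u with Jacobian ∂Υ/∂u(0,u) = id. Suppose for fixed u and all small s > 0 the averaged Jacobian M(s,u) = (1/s)∫₀ˢ (∂Υ/∂u)(r,u) dr is invertible. Then the limit lim_{t↓0} (Υ(t,u) − u)/t exists and equals (Υ(s,u) − u)/s · M(s,u)^{−1} for all sufficiently small s > 0; in particular t ↦ Υ(t,u) is right-differentiable at t = 0. -/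
open Complex intervalIntegral Set

set_option maxHeartbeats 1000000 in
theorem stmt18 (k : ℕ) (T : ℝ) (hT : 0 < T)
    (U : Set (Fin k → ℂ)) (hUopen : IsOpen U)
    (Υ : ℝ → (Fin k → ℂ) → (Fin k → ℂ))
    (hcont : ContinuousOn (fun p : ℝ × (Fin k → ℂ) => Υ p.1 p.2) (Ico 0 T ×ˢ U))
    (h0 : ∀ u ∈ U, Υ 0 u = u)
    (hmaps : ∀ t ∈ Ico (0:ℝ) T, ∀ u ∈ U, Υ t u ∈ U)
    (hflow : ∀ t ≥ (0:ℝ), ∀ s ≥ (0:ℝ), t + s < T → ∀ u ∈ U,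
      Υ (t + s) u = Υ t (Υ s u))
    -- the Jacobian ∂Υ/∂u, jointly continuous, equal to the identity at t = 0
    (Dm : ℝ → (Fin k → ℂ) → ((Fin k → ℂ) →L[ℂ] (Fin k → ℂ)))
    (hDer : ∀ r ∈ Ico (0:ℝ) T, ∀ u ∈ U, HasFDerivAt (Υ r) (Dm r u) u)
    (hDcont : ContinuousOn (fun p : ℝ × (Fin k → ℂ) => Dm p.1 p.2) (Ico 0 T ×ˢ U))
    (hD0 : ∀ u ∈ U, Dm 0 u = ContinuousLinearMap.id ℂ (Fin k → ℂ))
    -- the averaged Jacobian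
    (M : ℝ → (Fin k → ℂ) → ((Fin k → ℂ) →L[ℂ] (Fin k → ℂ)))
    (hM : ∀ s : ℝ, ∀ u : Fin k → ℂ,
      M s u = ((s : ℂ)⁻¹) • ∫ r in (0:ℝ)..s, Dm r u)
    (u : Fin k → ℂ) (hu : u ∈ U) (s₀ : ℝ) (hs₀ : s₀ ∈ Ioo 0 T)
    (hMinv : ∀ s ∈ Ioo (0:ℝ) s₀, ∃ N : (Fin k → ℂ) →L[ℂ] (Fin k → ℂ),
      (M s u).comp N = ContinuousLinearMap.id ℂ (Fin k → ℂ) ∧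
      N.comp (M s u) = ContinuousLinearMap.id ℂ (Fin k → ℂ)) :
    ∃ v : Fin k → ℂ,
      Filter.Tendsto (fun t : ℝ => (t⁻¹ : ℝ) • (Υ t u - u))
        (nhdsWithin 0 (Ioi 0)) (nhds v) ∧
      ∀ s ∈ Ioo (0:ℝ) s₀, ∀ N : (Fin k → ℂ) →L[ℂ] (Fin k → ℂ),
        ((M s u).comp N = ContinuousLinearMap.id ℂ (Fin k → ℂ) ∧
         N.comp (M s u) = ContinuousLinearMap.id ℂ (Fin k → ℂ)) →
        v = N ((s⁻¹ : ℝ) • (Υ s u - u)) := by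
  classical
  obtain ⟨hs₀0, hs₀T⟩ := hs₀
  -- continuity of slices
  have hslice : ∀ w ∈ U, ContinuousOn (fun r => Υ r w) (Ico 0 T) := by
    intro w hw
    exact hcont.comp ((continuous_id.prodMk continuous_const).continuousOn)
      (fun r hr => ⟨hr, hw⟩)
  have hDslice : ContinuousOn (fun r => Dm r u) (Ico 0 T) :=
    hDcont.comp ((continuous_id.prodMk continuous_const).continuousOn)
      (fun r hr => ⟨hr, hu⟩)
  -- integrability
  have hIInt : ∀ w ∈ U, ∀ a b : ℝ, 0 ≤ a → 0 ≤ b → a < T → b < T →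
      IntervalIntegrable (fun r => Υ r w) MeasureTheory.volume a b := by
    intro w hw a b ha hb haT hbT
    refine ((hslice w hw).mono ?_).intervalIntegrable
    intro x hx
    exact ⟨le_trans (le_min ha hb) hx.1, lt_of_le_of_lt hx.2 (max_lt haT hbT)⟩
  have hIInt2 : ∀ s t : ℝ, 0 ≤ s → 0 ≤ t → s + t < T →
      IntervalIntegrable (fun r => Υ (r + s) u) MeasureTheory.volume 0 t := by
    intro s t hs ht hstT
    refine (ContinuousOn.comp (hslice u hu)
      ((continuous_id.add continuous_const).continuousOn) ?_).intervalIntegrable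
    intro r hr
    rw [Set.uIcc_of_le ht] at hr
    simp only [Pi.add_apply, id_eq]
    exact ⟨by linarith [hr.1], by linarith [hr.2]⟩
  -- the key semiflow integral identity
  have key : ∀ s : ℝ, 0 < s → ∀ t : ℝ, 0 < t → s + t < T →
      (∫ r in (0:ℝ)..s, (Υ r (Υ t u) - Υ r u)) =
        ∫ r in (0:ℝ)..t, (Υ (r + s) u - Υ r u) := by
    intro s hs t ht hstT
    have htT : t < T := by linarith
    have hsT : s < T := by linarith
    have hwU : Υ t u ∈ U := hmaps t ⟨ht.le, htT⟩ u hu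
    have e1 : (∫ r in (0:ℝ)..s, Υ r (Υ t u)) = ∫ r in (0:ℝ)..s, Υ (r + t) u := by
      apply intervalIntegral.integral_congr
      intro r hr
      rw [Set.uIcc_of_le hs.le] at hr
      exact (hflow r hr.1 t ht.le (by linarith [hr.2]) u hu).symm
    have e2 : (∫ r in (0:ℝ)..s, Υ (r + t) u) = ∫ r in t..(s + t), Υ r u := by
      have := intervalIntegral.integral_comp_add_right (a := 0) (b := s) (fun r => Υ r u) t
      rwa [zero_add] at this
    have e3 : (∫ r in (0:ℝ)..t, Υ (r + s) u) = ∫ r in s..(s + t), Υ r u := by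
      have := intervalIntegral.integral_comp_add_right (a := 0) (b := t) (fun r => Υ r u) s
      rw [this, zero_add, add_comm t s]
    have hI1 : IntervalIntegrable (fun r => Υ r u) MeasureTheory.volume 0 t :=
      hIInt u hu 0 t le_rfl ht.le hT htT
    have hI2 : IntervalIntegrable (fun r => Υ r u) MeasureTheory.volume t (s + t) :=
      hIInt u hu t (s + t) ht.le (by linarith) htT hstT
    have hI3 : IntervalIntegrable (fun r => Υ r u) MeasureTheory.volume 0 s :=
      hIInt u hu 0 s le_rfl hs.le hT hsT
    have hI4 : IntervalIntegrable (fun r => Υ r u) MeasureTheory.volume s (s + t) :=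
      hIInt u hu s (s + t) hs.le (by linarith) hsT hstT
    have A1 : (∫ r in (0:ℝ)..t, Υ r u) + ∫ r in t..(s+t), Υ r u
        = ∫ r in (0:ℝ)..(s+t), Υ r u :=
      intervalIntegral.integral_add_adjacent_intervals hI1 hI2
    have A2 : (∫ r in (0:ℝ)..s, Υ r u) + ∫ r in s..(s+t), Υ r u
        = ∫ r in (0:ℝ)..(s+t), Υ r u :=
      intervalIntegral.integral_add_adjacent_intervals hI3 hI4
    have hIw : IntervalIntegrable (fun r => Υ r (Υ t u)) MeasureTheory.volume 0 s :=
      hIInt _ hwU 0 s le_rfl hs.le hT hsT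
    have hIts : IntervalIntegrable (fun r => Υ (r + s) u) MeasureTheory.volume 0 t :=
      hIInt2 s t hs.le ht.le hstT
    rw [intervalIntegral.integral_sub hIw hI3, intervalIntegral.integral_sub hIts hI1,
      e1, e2, e3]
    linear_combination A1 - A2
  -- uniform Taylor expansion
  have taylor : ∀ s : ℝ, 0 < s → s < T → ∀ ε : ℝ, 0 < ε →
      ∃ δ > 0, Metric.ball u δ ⊆ U ∧
        ∀ w ∈ Metric.ball u δ, ∀ r ∈ Icc (0:ℝ) s,
          ‖Υ r w - Υ r u - Dm r u (w - u)‖ ≤ ε * ‖w - u‖ := by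
    intro s hs hsT ε hε
    obtain ⟨δ₀, hδ₀, hball⟩ := Metric.isOpen_iff.1 hUopen u hu
    have hcb : Metric.closedBall u (δ₀/2) ⊆ U :=
      fun x hx => hball (Metric.mem_ball.2
        (lt_of_le_of_lt (Metric.mem_closedBall.1 hx) (by linarith)))
    have hKsub : Icc (0:ℝ) s ×ˢ Metric.closedBall u (δ₀/2) ⊆ Ico 0 T ×ˢ U := by
      intro p hp
      exact ⟨⟨hp.1.1, lt_of_le_of_lt hp.1.2 hsT⟩, hcb hp.2⟩
    have huc := (isCompact_Icc.prod
      (isCompact_closedBall u (δ₀/2))).uniformContinuousOn_of_continuous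
      (hDcont.mono hKsub)
    rw [Metric.uniformContinuousOn_iff] at huc
    obtain ⟨δ₁, hδ₁, hd⟩ := huc ε hε
    set δ := min (δ₀/2) δ₁ with hδdef
    have hδpos : 0 < δ := lt_min (by linarith) hδ₁
    have hballcb : Metric.ball u δ ⊆ Metric.closedBall u (δ₀/2) :=
      (Metric.ball_subset_ball (min_le_left _ _)).trans Metric.ball_subset_closedBall
    have hballU : Metric.ball u δ ⊆ U := hballcb.trans hcb
    refine ⟨δ, hδpos, hballU, ?_⟩
    intro w hw r hr
    have hrT : r ∈ Ico (0:ℝ) T := ⟨hr.1, lt_of_le_of_lt hr.2 hsT⟩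
    have hder : ∀ x ∈ Metric.ball u δ,
        HasFDerivWithinAt (Υ r) (Dm r x) (Metric.ball u δ) x :=
      fun x hx => (hDer r hrT x (hballU hx)).hasFDerivWithinAt
    have hbound : ∀ x ∈ Metric.ball u δ, ‖Dm r x - Dm r u‖ ≤ ε := by
      intro x hx
      have h1 : ((r, x) : ℝ × (Fin k → ℂ)) ∈ Icc (0:ℝ) s ×ˢ Metric.closedBall u (δ₀/2) :=
        ⟨hr, hballcb hx⟩
      have h2 : ((r, u) : ℝ × (Fin k → ℂ)) ∈ Icc (0:ℝ) s ×ˢ Metric.closedBall u (δ₀/2) :=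
        ⟨hr, Metric.mem_closedBall_self (by linarith)⟩
      have hdist : dist ((r, x) : ℝ × (Fin k → ℂ)) (r, u) < δ₁ := by
        rw [Prod.dist_eq]
        simp only [dist_self]
        exact max_lt hδ₁ (lt_of_lt_of_le hx (min_le_right _ _))
      have := hd _ h1 _ h2 hdist
      rw [dist_eq_norm] at this
      exact this.le
    exact Convex.norm_image_sub_le_of_norm_hasFDerivWithin_le' hder hbound
      (convex_ball u δ) (Metric.mem_ball_self hδpos) hw
  -- continuity of r ↦ Υ(r+s,u) - Υ(r,u)
  have hgcont : ∀ s : ℝ, 0 < s → s < T →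
      ContinuousOn (fun r => Υ (r + s) u - Υ r u) (Ico 0 (T - s)) := by
    intro s hs hsT
    have h1 : ContinuousOn (fun r : ℝ => Υ (r + s) u) (Ico 0 (T - s)) := by
      refine ContinuousOn.comp (hslice u hu)
        ((continuous_id.add continuous_const).continuousOn) ?_
      intro r hr
      simp only [id_eq]
      exact ⟨by linarith [hr.1], by linarith [hr.2]⟩
    exact h1.sub ((hslice u hu).mono (fun x hx => ⟨hx.1, by linarith [hx.2]⟩))
  -- smallness of the integrand near 0
  have gsmall : ∀ s : ℝ, 0 < s → s < T → ∀ η : ℝ, 0 < η →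
      ∃ c > 0, c ≤ T - s ∧ ∀ r, 0 ≤ r → r < c →
        ‖(Υ (r + s) u - Υ r u) - (Υ s u - u)‖ < η := by
    intro s hs hsT η hη
    have h0mem : (0:ℝ) ∈ Ico 0 (T - s) := ⟨le_rfl, by linarith⟩
    have hcw : ContinuousWithinAt (fun r => Υ (r + s) u - Υ r u) (Ico 0 (T - s)) 0 :=
      (hgcont s hs hsT).continuousWithinAt h0mem
    have hval : Υ (0 + s) u - Υ 0 u = Υ s u - u := by rw [zero_add, h0 u hu]
    have hev : ∀ᶠ r in nhdsWithin 0 (Ico 0 (T - s)),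
        dist (Υ (r + s) u - Υ r u) (Υ s u - u) < η := by
      have := Metric.tendsto_nhds.1 hcw η hη
      simpa only [hval] using this
    obtain ⟨c₀, hc₀, hsub⟩ := Metric.mem_nhdsWithin_iff.1 hev
    refine ⟨min c₀ (T - s), lt_min hc₀ (by linarith), min_le_right _ _, ?_⟩
    intro r hr0 hrc
    have hrc₀ : r < c₀ := lt_of_lt_of_le hrc (min_le_left _ _)
    have hrTs : r < T - s := lt_of_lt_of_le hrc (min_le_right _ _)
    have hmem : r ∈ Metric.ball (0:ℝ) c₀ ∩ Ico 0 (T - s) := by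
      refine ⟨?_, hr0, hrTs⟩
      rw [Metric.mem_ball, Real.dist_eq, sub_zero, _root_.abs_of_nonneg hr0]
      exact hrc₀
    have := hsub hmem
    rwa [Set.mem_setOf_eq, dist_eq_norm] at this
  -- Υ t u tends to u as t → 0⁺
  have htend0 : Filter.Tendsto (fun t => Υ t u) (nhdsWithin (0:ℝ) (Ioi 0)) (nhds u) := by
    have h := (hslice u hu).continuousWithinAt (⟨le_rfl, hT⟩ : (0:ℝ) ∈ Ico 0 T)
    rw [ContinuousWithinAt, h0 u hu] at h
    refine h.mono_left ?_
    rw [← nhdsWithin_Ioo_eq_nhdsGT hT]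
    exact nhdsWithin_mono _ Ioo_subset_Ico_self
  -- the remainder estimate in the main identity
  have ident : ∀ s : ℝ, 0 < s → s < T → ∀ ε δ : ℝ, 0 < ε → 0 < δ →
      Metric.ball u δ ⊆ U →
      (∀ w ∈ Metric.ball u δ, ∀ r ∈ Icc (0:ℝ) s,
        ‖Υ r w - Υ r u - Dm r u (w - u)‖ ≤ ε * ‖w - u‖) →
      ∀ t : ℝ, 0 < t → s + t < T → Υ t u ∈ Metric.ball u δ →
      ‖(∫ r in (0:ℝ)..t, (Υ (r + s) u - Υ r u))
          - (s:ℂ) • (M s u) (Υ t u - u)‖ ≤ ε * ‖Υ t u - u‖ * s := by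
    intro s hs hsT ε δ hε hδ hballU htay t ht hstT hballt
    have htT : t < T := by linarith
    have hwU : Υ t u ∈ U := hballU hballt
    have hIw : IntervalIntegrable (fun r => Υ r (Υ t u)) MeasureTheory.volume 0 s :=
      hIInt _ hwU 0 s le_rfl hs.le hT hsT
    have hIu : IntervalIntegrable (fun r => Υ r u) MeasureTheory.volume 0 s :=
      hIInt u hu 0 s le_rfl hs.le hT hsT
    have hDint : IntervalIntegrable (fun r => Dm r u) MeasureTheory.volume 0 s := by
      refine (hDslice.mono ?_).intervalIntegrable
      intro x hx
      rw [Set.uIcc_of_le hs.le] at hx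
      exact ⟨hx.1, lt_of_le_of_lt hx.2 hsT⟩
    have hDapp : IntervalIntegrable (fun r => Dm r u (Υ t u - u)) MeasureTheory.volume 0 s := by
      refine (ContinuousOn.clm_apply (hDslice.mono ?_) continuousOn_const).intervalIntegrable
      intro x hx
      rw [Set.uIcc_of_le hs.le] at hx
      exact ⟨hx.1, lt_of_le_of_lt hx.2 hsT⟩
    have hsplit : (∫ r in (0:ℝ)..s, (Υ r (Υ t u) - Υ r u))
        = (∫ r in (0:ℝ)..s, Dm r u (Υ t u - u))
          + ∫ r in (0:ℝ)..s, (Υ r (Υ t u) - Υ r u - Dm r u (Υ t u - u)) := by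
      rw [← intervalIntegral.integral_add hDapp ((hIw.sub hIu).sub hDapp)]
      apply intervalIntegral.integral_congr
      intro r _
      abel
    have happly : (∫ r in (0:ℝ)..s, Dm r u) (Υ t u - u)
        = ∫ r in (0:ℝ)..s, Dm r u (Υ t u - u) :=
      ContinuousLinearMap.intervalIntegral_apply hDint (Υ t u - u)
    have hIM : (∫ r in (0:ℝ)..s, Dm r u) = (s:ℂ) • M s u := by
      rw [hM s u, smul_smul, mul_inv_cancel₀ (ofReal_ne_zero.2 hs.ne'), one_smul]
    have hRform : (∫ r in (0:ℝ)..t, (Υ (r + s) u - Υ r u))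
          - (s:ℂ) • (M s u) (Υ t u - u)
        = ∫ r in (0:ℝ)..s, (Υ r (Υ t u) - Υ r u - Dm r u (Υ t u - u)) := by
      rw [← key s hs t ht hstT, hsplit]
      have : (s:ℂ) • (M s u) (Υ t u - u) = ((s:ℂ) • M s u) (Υ t u - u) := by
        rw [ContinuousLinearMap.smul_apply]
      rw [this, ← hIM, happly]
      abel
    rw [hRform]
    have hbd := intervalIntegral.norm_integral_le_of_norm_le_const
      (C := ε * ‖Υ t u - u‖) (f := fun r => Υ r (Υ t u) - Υ r u - Dm r u (Υ t u - u))
      (a := 0) (b := s) ?_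
    · calc ‖∫ r in (0:ℝ)..s, (Υ r (Υ t u) - Υ r u - Dm r u (Υ t u - u))‖
          ≤ ε * ‖Υ t u - u‖ * |s - 0| := hbd
        _ = ε * ‖Υ t u - u‖ * s := by
            rw [sub_zero, _root_.abs_of_pos hs]
    · intro r hr
      rw [Set.uIoc_of_le hs.le] at hr
      exact htay (Υ t u) hballt r ⟨hr.1.le, hr.2⟩
  -- F t / t → Υ s u - u
  have Flim : ∀ s : ℝ, 0 < s → s < T →
      Filter.Tendsto
        (fun t : ℝ => (t⁻¹ : ℝ) • ∫ r in (0:ℝ)..t, (Υ (r + s) u - Υ r u))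
        (nhdsWithin 0 (Ioi 0)) (nhds (Υ s u - u)) := by
    intro s hs hsT
    rw [Metric.tendsto_nhds]
    intro ε hε
    obtain ⟨c, hc, hcTs, hg⟩ := gsmall s hs hsT (ε/2) (by positivity)
    filter_upwards [Ioo_mem_nhdsGT_of_mem (⟨le_rfl, hc⟩ : (0:ℝ) ∈ Ico 0 c)] with t ht
    obtain ⟨ht0, htc⟩ := ht
    have htTs : t < T - s := lt_of_lt_of_le htc hcTs
    have hgi : IntervalIntegrable (fun r => Υ (r + s) u - Υ r u) MeasureTheory.volume 0 t := by
      refine ((hgcont s hs hsT).mono ?_).intervalIntegrable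
      intro x hx
      rw [Set.uIcc_of_le ht0.le] at hx
      exact ⟨hx.1, lt_of_le_of_lt hx.2 htTs⟩
    have hconst : (∫ _r in (0:ℝ)..t, (Υ s u - u)) = t • (Υ s u - u) := by
      simp [smul_sub]
    have hsubint : (∫ r in (0:ℝ)..t, (Υ (r + s) u - Υ r u)) - t • (Υ s u - u)
        = ∫ r in (0:ℝ)..t, ((Υ (r + s) u - Υ r u) - (Υ s u - u)) := by
      rw [intervalIntegral.integral_sub hgi intervalIntegrable_const, hconst]
      
    have hbd := intervalIntegral.norm_integral_le_of_norm_le_const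
      (C := ε/2) (f := fun r => (Υ (r + s) u - Υ r u) - (Υ s u - u)) (a := 0) (b := t) ?_
    · rw [dist_eq_norm]
      have heq : (t⁻¹ : ℝ) • (∫ r in (0:ℝ)..t, (Υ (r + s) u - Υ r u)) - (Υ s u - u)
          = (t⁻¹ : ℝ) • ((∫ r in (0:ℝ)..t, (Υ (r + s) u - Υ r u)) - t • (Υ s u - u)) := by
        rw [smul_sub, smul_smul, inv_mul_cancel₀ ht0.ne', one_smul]
      rw [heq, norm_smul, Real.norm_eq_abs, _root_.abs_of_pos (inv_pos.2 ht0), hsubint]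
      calc t⁻¹ * ‖∫ r in (0:ℝ)..t, ((Υ (r + s) u - Υ r u) - (Υ s u - u))‖
          ≤ t⁻¹ * (ε/2 * |t - 0|) := by
            exact mul_le_mul_of_nonneg_left hbd (inv_nonneg.2 ht0.le)
        _ = ε/2 := by
            rw [sub_zero, _root_.abs_of_pos ht0]
            field_simp
        _ < ε := by linarith
    · intro r hr
      rw [Set.uIoc_of_le ht0.le] at hr
      exact (hg r hr.1.le (lt_of_le_of_lt hr.2 htc)).le
  -- main limit lemma
  have L : ∀ s : ℝ, 0 < s → s < T →
      (∃ B : ℝ, ∀ᶠ t in nhdsWithin (0:ℝ) (Ioi 0), ‖Υ t u - u‖ ≤ B * t) →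
      Filter.Tendsto (fun t : ℝ => (M s u) ((t⁻¹ : ℝ) • (Υ t u - u)))
        (nhdsWithin 0 (Ioi 0)) (nhds ((s⁻¹ : ℝ) • (Υ s u - u))) := by
    intro s hs hsT hBex
    obtain ⟨B, hB⟩ := hBex
    have alg : ∀ t : ℝ, (M s u) ((t⁻¹ : ℝ) • (Υ t u - u)) =
        (s⁻¹ : ℝ) • ((t⁻¹ : ℝ) • (∫ r in (0:ℝ)..t, (Υ (r + s) u - Υ r u)))
        - (s⁻¹ : ℝ) • ((t⁻¹ : ℝ) • ((∫ r in (0:ℝ)..t, (Υ (r + s) u - Υ r u))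
            - (s:ℂ) • (M s u) (Υ t u - u))) := by
      intro t
      rw [(M s u).map_smul_of_tower, Complex.coe_smul, ← smul_sub, ← smul_sub,
        sub_sub_cancel, smul_comm (t⁻¹ : ℝ) s, smul_smul, inv_mul_cancel₀ hs.ne', one_smul]
    have h2 : Filter.Tendsto
        (fun t : ℝ => (s⁻¹ : ℝ) • ((t⁻¹ : ℝ) • (∫ r in (0:ℝ)..t, (Υ (r + s) u - Υ r u))))
        (nhdsWithin 0 (Ioi 0)) (nhds ((s⁻¹ : ℝ) • (Υ s u - u))) :=
      (Flim s hs hsT).const_smul _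
    have h3 : Filter.Tendsto
        (fun t : ℝ => (t⁻¹ : ℝ) • ((∫ r in (0:ℝ)..t, (Υ (r + s) u - Υ r u))
            - (s:ℂ) • (M s u) (Υ t u - u)))
        (nhdsWithin 0 (Ioi 0)) (nhds 0) := by
      rw [NormedAddCommGroup.tendsto_nhds_zero]
      intro ε hε
      have hεd : 0 < ε / (s * (|B| + 1)) := by positivity
      obtain ⟨δ, hδ, hballU, htay⟩ := taylor s hs hsT _ hεd
      filter_upwards [hB, htend0 (Metric.ball_mem_nhds u hδ),
        Ioo_mem_nhdsGT_of_mem (⟨le_rfl, by linarith⟩ : (0:ℝ) ∈ Ico 0 (T - s))]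
        with t hBt hballt ht
      obtain ⟨ht0, htTs⟩ := ht
      have hid := ident s hs hsT _ δ hεd hδ hballU htay t ht0 (by linarith) hballt
      have hφB : ‖Υ t u - u‖ ≤ |B| * t :=
        le_trans hBt (mul_le_mul_of_nonneg_right (le_abs_self B) ht0.le)
      calc ‖(t⁻¹ : ℝ) • ((∫ r in (0:ℝ)..t, (Υ (r + s) u - Υ r u))
              - (s:ℂ) • (M s u) (Υ t u - u))‖
          = t⁻¹ * ‖(∫ r in (0:ℝ)..t, (Υ (r + s) u - Υ r u))
              - (s:ℂ) • (M s u) (Υ t u - u)‖ := by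
            rw [norm_smul, Real.norm_eq_abs, _root_.abs_of_pos (inv_pos.2 ht0)]
        _ ≤ t⁻¹ * (ε / (s * (|B| + 1)) * (|B| * t) * s) := by
            refine mul_le_mul_of_nonneg_left ?_ (inv_nonneg.2 ht0.le)
            refine le_trans hid ?_
            have h1 : 0 ≤ ε / (s * (|B| + 1)) := hεd.le
            exact mul_le_mul_of_nonneg_right
              (mul_le_mul_of_nonneg_left hφB h1) hs.le
        _ = ε / (s * (|B| + 1)) * |B| * s := by field_simp
        _ < ε := by
            rw [div_mul_eq_mul_div, div_mul_eq_mul_div, div_lt_iff₀ (by positivity)]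
            nlinarith [abs_nonneg B]
    have h3' : Filter.Tendsto
        (fun t : ℝ => (s⁻¹ : ℝ) • ((t⁻¹ : ℝ) • ((∫ r in (0:ℝ)..t, (Υ (r + s) u - Υ r u))
            - (s:ℂ) • (M s u) (Υ t u - u))))
        (nhdsWithin 0 (Ioi 0)) (nhds 0) := by
      have := h3.const_smul (s⁻¹ : ℝ)
      simpa using this
    have := h2.sub h3'
    rw [sub_zero] at this
    exact this.congr (fun t => (alg t).symm)
  -- boundedness of ‖Υ t u - u‖ / t
  have bdd : ∃ B : ℝ, ∀ᶠ t in nhdsWithin (0:ℝ) (Ioi 0), ‖Υ t u - u‖ ≤ B * t := by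
    have hs : 0 < s₀/2 := by linarith
    have hsT : s₀/2 < T := by linarith
    obtain ⟨N, hN1, hN2⟩ := hMinv (s₀/2) ⟨hs, by linarith⟩
    have hNapp : ∀ x, N ((M (s₀/2) u) x) = x := by
      intro x
      have := DFunLike.congr_fun hN2 x
      simpa using this
    have hε₁ : (0:ℝ) < 1 / (2 * ‖N‖ + 2) := by positivity
    obtain ⟨δ, hδ, hballU, htay⟩ := taylor (s₀/2) hs hsT _ hε₁
    obtain ⟨c, hc, hcTs, hg1⟩ := gsmall (s₀/2) hs hsT 1 one_pos
    have hgK : ∀ r, 0 ≤ r → r < c →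
        ‖Υ (r + s₀/2) u - Υ r u‖ ≤ ‖Υ (s₀/2) u - u‖ + 1 := by
      intro r h1 h2
      have h3 := hg1 r h1 h2
      have h4 : ‖Υ (r + s₀/2) u - Υ r u‖
          ≤ ‖(Υ (r + s₀/2) u - Υ r u) - (Υ (s₀/2) u - u)‖ + ‖Υ (s₀/2) u - u‖ := by
        have := norm_add_le ((Υ (r + s₀/2) u - Υ r u) - (Υ (s₀/2) u - u)) (Υ (s₀/2) u - u)
        simpa using this
      linarith
    refine ⟨‖N‖ * (2 * (‖Υ (s₀/2) u - u‖ + 1) / (s₀/2)), ?_⟩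
    filter_upwards [htend0 (Metric.ball_mem_nhds u hδ),
      Ioo_mem_nhdsGT_of_mem (⟨le_rfl, lt_min hc (by linarith)⟩ :
        (0:ℝ) ∈ Ico 0 (min c (T - s₀/2)))] with t hballt ht
    obtain ⟨ht0, htm⟩ := ht
    have htc : t < c := lt_of_lt_of_le htm (min_le_left _ _)
    have htTs : t < T - s₀/2 := lt_of_lt_of_le htm (min_le_right _ _)
    have hid := ident (s₀/2) hs hsT _ δ hε₁ hδ hballU htay t ht0 (by linarith) hballt
    have hF : ‖∫ r in (0:ℝ)..t, (Υ (r + s₀/2) u - Υ r u)‖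
        ≤ (‖Υ (s₀/2) u - u‖ + 1) * t := by
      have hbd := intervalIntegral.norm_integral_le_of_norm_le_const
        (C := ‖Υ (s₀/2) u - u‖ + 1) (f := fun r => Υ (r + s₀/2) u - Υ r u)
        (a := 0) (b := t) ?_
      · calc ‖∫ r in (0:ℝ)..t, (Υ (r + s₀/2) u - Υ r u)‖
            ≤ (‖Υ (s₀/2) u - u‖ + 1) * |t - 0| := hbd
          _ = (‖Υ (s₀/2) u - u‖ + 1) * t := by rw [sub_zero, _root_.abs_of_pos ht0]
      · intro r hr
        rw [Set.uIoc_of_le ht0.le] at hr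
        exact hgK r hr.1.le (lt_of_le_of_lt hr.2 htc)
    have hsM : ‖((s₀/2 : ℝ) : ℂ) • (M (s₀/2) u) (Υ t u - u)‖
        = (s₀/2) * ‖(M (s₀/2) u) (Υ t u - u)‖ := by
      rw [norm_smul, Complex.norm_real, Real.norm_eq_abs, _root_.abs_of_pos hs]
    have hMb : ‖((s₀/2 : ℝ) : ℂ) • (M (s₀/2) u) (Υ t u - u)‖
        ≤ ‖∫ r in (0:ℝ)..t, (Υ (r + s₀/2) u - Υ r u)‖
          + ‖(∫ r in (0:ℝ)..t, (Υ (r + s₀/2) u - Υ r u))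
            - ((s₀/2 : ℝ) : ℂ) • (M (s₀/2) u) (Υ t u - u)‖ := by
      have h := norm_sub_norm_le (((s₀/2 : ℝ) : ℂ) • (M (s₀/2) u) (Υ t u - u))
        (∫ r in (0:ℝ)..t, (Υ (r + s₀/2) u - Υ r u))
      rw [norm_sub_rev] at h
      linarith
    have hφM : ‖Υ t u - u‖ ≤ ‖N‖ * ‖(M (s₀/2) u) (Υ t u - u)‖ := by
      conv_lhs => rw [← hNapp (Υ t u - u)]
      exact N.le_opNorm _
    have hmn : (0:ℝ) ≤ ‖(M (s₀/2) u) (Υ t u - u)‖ := norm_nonneg _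
    have hNn : (0:ℝ) ≤ ‖N‖ := norm_nonneg _
    have hchain : (s₀/2) * ‖(M (s₀/2) u) (Υ t u - u)‖
        ≤ (‖Υ (s₀/2) u - u‖ + 1) * t
          + 1 / (2 * ‖N‖ + 2) * ‖Υ t u - u‖ * (s₀/2) := by
      rw [← hsM]
      exact le_trans hMb (add_le_add hF hid)
    have hhalf : 1 / (2 * ‖N‖ + 2) * ‖N‖ ≤ 1/2 := by
      rw [div_mul_eq_mul_div, div_le_div_iff₀ (by positivity) (by norm_num)]
      nlinarith
    have hstep : 1 / (2 * ‖N‖ + 2) * ‖Υ t u - u‖ * (s₀/2)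
        ≤ (1/2) * (‖(M (s₀/2) u) (Υ t u - u)‖ * (s₀/2)) := by
      have h1 : 1 / (2 * ‖N‖ + 2) * ‖Υ t u - u‖
          ≤ 1 / (2 * ‖N‖ + 2) * (‖N‖ * ‖(M (s₀/2) u) (Υ t u - u)‖) :=
        mul_le_mul_of_nonneg_left hφM (by positivity)
      have h2 : 1 / (2 * ‖N‖ + 2) * (‖N‖ * ‖(M (s₀/2) u) (Υ t u - u)‖)
          ≤ (1/2) * ‖(M (s₀/2) u) (Υ t u - u)‖ := by
        rw [← mul_assoc]
        exact mul_le_mul_of_nonneg_right hhalf hmn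
      nlinarith
    have hmK : ‖(M (s₀/2) u) (Υ t u - u)‖
        ≤ 2 * (‖Υ (s₀/2) u - u‖ + 1) * t / (s₀/2) := by
      rw [le_div_iff₀ hs]
      nlinarith
    calc ‖Υ t u - u‖ ≤ ‖N‖ * ‖(M (s₀/2) u) (Υ t u - u)‖ := hφM
      _ ≤ ‖N‖ * (2 * (‖Υ (s₀/2) u - u‖ + 1) * t / (s₀/2)) :=
          mul_le_mul_of_nonneg_left hmK hNn
      _ = ‖N‖ * (2 * (‖Υ (s₀/2) u - u‖ + 1) / (s₀/2)) * t := by ring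
  -- assemble
  have hs : 0 < s₀/2 := by linarith
  have hsT : s₀/2 < T := by linarith
  have hsmem : s₀/2 ∈ Ioo (0:ℝ) s₀ := ⟨hs, by linarith⟩
  obtain ⟨N, hN1, hN2⟩ := hMinv (s₀/2) hsmem
  have hNapp : ∀ x, N ((M (s₀/2) u) x) = x := by
    intro x
    have := DFunLike.congr_fun hN2 x
    simpa using this
  have hMtend := L (s₀/2) hs hsT bdd
  have hφtend : Filter.Tendsto (fun t : ℝ => (t⁻¹ : ℝ) • (Υ t u - u))
      (nhdsWithin 0 (Ioi 0)) (nhds (N (((s₀/2)⁻¹ : ℝ) • (Υ (s₀/2) u - u)))) := by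
    have := (N.continuous.tendsto _).comp hMtend
    exact this.congr (fun t => hNapp _)
  refine ⟨N (((s₀/2)⁻¹ : ℝ) • (Υ (s₀/2) u - u)), hφtend, ?_⟩
  intro s' hs' N' hN'
  have h1 := L s' hs'.1 (lt_trans hs'.2 hs₀T) bdd
  have h2 : Filter.Tendsto (fun t : ℝ => (M s' u) ((t⁻¹ : ℝ) • (Υ t u - u)))
      (nhdsWithin 0 (Ioi 0))
      (nhds ((M s' u) (N (((s₀/2)⁻¹ : ℝ) • (Υ (s₀/2) u - u))))) :=
    ((M s' u).continuous.tendsto _).comp hφtend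
  have huniq : (M s' u) (N (((s₀/2)⁻¹ : ℝ) • (Υ (s₀/2) u - u)))
      = (s'⁻¹ : ℝ) • (Υ s' u - u) := tendsto_nhds_unique h2 h1
  have hN'app : ∀ x, N' ((M s' u) x) = x := by
    intro x
    have := DFunLike.congr_fun hN'.2 x
    simpa using this
  rw [← huniq, hN'app]
end
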